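/- Let M ⊆ ℝⁿ be a convex polytope with nonempty interior and f : M → ℝⁿ Lipschitz with Lip(f) < 1 such that φ := id + f satisfies φ(∂M) = ∂M and φ(M) ⊆ M. Then φ(M) = M and φ(M⁰) = M⁰, where M⁰ is the interior of M. -/

import Mathlib

open Set

/-- A convex polytope: the convex hull of a finite set. -/
def IsPolytope (n : ℕ) (M : Set (Fin n → ℝ)) : Prop :=
  ∃ S : Finset (Fin n → ℝ), M = convexHull ℝ (S : Set (Fin n → ℝ))

/-- A face of `M`: a convex extreme subset of `M`. -/
def IsFaceOf (n : ℕ) (M F : Set (Fin n → ℝ)) : Prop :=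
  Convex ℝ F ∧ IsExtreme ℝ M F

/-- The smallest face of `M` containing `x`: the intersection of all faces containing `x`. -/
def smallestFace (n : ℕ) (M : Set (Fin n → ℝ)) (x : Fin n → ℝ) : Set (Fin n → ℝ) :=
  ⋂₀ {F | IsFaceOf n M F ∧ x ∈ F}

/-- `E(x) := span_ℝ (M(x) - x)`, where `M(x)` is the smallest face of `M` containing `x`. -/
def spanAt (n : ℕ) (M : Set (Fin n → ℝ)) (x : Fin n → ℝ) : Submodule ℝ (Fin n → ℝ) :=
  Submodule.span ℝ ((fun y => y - x) '' smallestFace n M x)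

/-- dimension of a set: the dimension of its affine hull. -/
noncomputable def setDim (n : ℕ) (F : Set (Fin n → ℝ)) : ℕ :=
  Module.finrank ℝ (vectorSpan ℝ F)

/-- The stratum `∂_i(M)` of points of index `i`, i.e. whose smallest containing face
has dimension `n - i`. -/
def stratum (n : ℕ) (M : Set (Fin n → ℝ)) (i : ℕ) : Set (Fin n → ℝ) :=
  {x ∈ M | setDim n (smallestFace n M x) = n - i}

/-- Let `M ⊆ ℝⁿ` be a convex polytope with nonempty interior and
`f : M → ℝⁿ` Lipschitz with `Lip(f) < 1` such that `φ := id + f` satisfies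
`φ(∂M) = ∂M` and `φ(M) ⊆ M`.  Then `φ(M) = M` and `φ(M⁰) = M⁰`. -/
theorem perturbation_preserving_boundary_is_surjective {n : ℕ} (M : Set (Fin n → ℝ))
    (hM : IsPolytope n M) (hMi : (interior M).Nonempty)
    (f : (Fin n → ℝ) → (Fin n → ℝ)) (K : NNReal) (hK : K < 1)
    (hf : LipschitzOnWith K f M)
    (hbd : (fun x => x + f x) '' frontier M = frontier M)
    (hsub : (fun x => x + f x) '' M ⊆ M) :
    (fun x => x + f x) '' M = M ∧
      (fun x => x + f x) '' interior M = interior M := by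
  obtain ⟨S, hS⟩ := hM
  classical
  set φ : (Fin n → ℝ) → (Fin n → ℝ) := fun x => x + f x with hφ
  
  have hMcompact : IsCompact M := by
    rw [hS]; exact S.finite_toSet.isCompact_convexHull ℝ
  have hMclosed : IsClosed M := hMcompact.isClosed
  have hMconv : Convex ℝ M := by rw [hS]; exact convex_convexHull ℝ _
  have hfnorm : ∀ x ∈ M, ∀ y ∈ M, ‖f x - f y‖ ≤ K * ‖x - y‖ := by
    intro x hx y hy
    exact lipschitzOnWith_iff_norm_sub_le.1 hf hx hy
  -- injectivity
  have hinj : Set.InjOn φ M := by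
    intro x hx y hy hxy
    by_contra hne
    have h1 : x - y = f y - f x := by
      have h : x + f x = y + f y := hxy
      linear_combination h
    have h2 : ‖x - y‖ ≤ K * ‖x - y‖ :=
      calc ‖x - y‖ = ‖f y - f x‖ := by rw [h1]
      _ = ‖f x - f y‖ := norm_sub_rev _ _
      _ ≤ K * ‖x - y‖ := hfnorm x hx y hy
    have h3 : (0:ℝ) < ‖x - y‖ := by
      rw [norm_pos_iff]; intro h; exact hne (sub_eq_zero.1 h)
    nlinarith [h2, h3, (show (K:ℝ) < 1 from hK)]
  -- frontier ⊆ M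
  have hfr : frontier M ⊆ M := hMclosed.frontier_subset
  have hfrE : frontier M = M \ interior M := hMclosed.frontier_eq
  have hMunion : M = interior M ∪ frontier M := by
    rw [hfrE]; rw [union_diff_cancel' (Subset.refl _) interior_subset]
  -- φ(int M) ⊆ int M
  have hio : φ '' interior M ⊆ interior M := by
    rintro _ ⟨x, hx, rfl⟩
    have hxM : x ∈ M := interior_subset hx
    have hφM : φ x ∈ M := hsub ⟨x, hxM, rfl⟩
    by_contra hno
    have hfrm : φ x ∈ frontier M := by rw [hfrE]; exact ⟨hφM, hno⟩
    rw [← hbd] at hfrm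
    obtain ⟨y, hy, hyx⟩ := hfrm
    have : y = x := hinj (hfr hy) hxM hyx
    subst this
    rw [hfrE] at hy; exact hy.2 hx
  -- φ(int M) open via approximates linear on
  have happrox : ApproximatesLinearOn φ (ContinuousLinearMap.id ℝ (Fin n → ℝ))
      (interior M) K := by
    intro x hx y hy
    have e : φ x - φ y - (ContinuousLinearMap.id ℝ (Fin n → ℝ)) (x - y) = f x - f y := by
      simp only [hφ, ContinuousLinearMap.id_apply]; abel
    rw [e]
    exact hfnorm x (interior_subset hx) y (interior_subset hy)
  let rinv : ContinuousLinearMap.NonlinearRightInverse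
      (ContinuousLinearMap.id ℝ (Fin n → ℝ)) :=
    { toFun := id
      nnnorm := 1
      bound' := fun y => by simp
      right_inv' := fun y => rfl }
  have hopen : IsOpen (φ '' interior M) := by
    refine happrox.open_image rinv isOpen_interior (Or.inr ?_)
    show K < (1:NNReal)⁻¹
    simpa using hK
  -- φ continuous on M, φ(M) compact
  have hcont : ContinuousOn φ M := continuousOn_id.add hf.continuousOn
  have hcomp : IsCompact (φ '' M) := hMcompact.image_of_continuousOn hcont
  -- φ '' interior M = φ '' M ∩ interior M
  have hkey : φ '' interior M = φ '' M ∩ interior M := by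
    apply Subset.antisymm
    · exact subset_inter (image_mono interior_subset) hio
    · rintro z ⟨⟨x, hxM, rfl⟩, hzint⟩
      refine ⟨x, ?_, rfl⟩
      by_contra hno
      have hxfr : x ∈ frontier M := by rw [hfrE]; exact ⟨hxM, hno⟩
      have : φ x ∈ frontier M := by rw [← hbd]; exact ⟨x, hxfr, rfl⟩
      rw [hfrE] at this; exact this.2 hzint
  -- connectedness argument
  have hpre : IsPreconnected (interior M) := (hMconv.interior).isPreconnected
  have hintsub : interior M ⊆ φ '' interior M := by
    have hcover : interior M ⊆ (φ '' interior M) ∪ (φ '' M)ᶜ := by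
      intro z hz
      by_cases hzim : z ∈ φ '' M
      · left; rw [hkey]; exact ⟨hzim, hz⟩
      · right; exact hzim
    have hne1 : (interior M ∩ φ '' interior M).Nonempty := by
      obtain ⟨x, hx⟩ := hMi
      exact ⟨φ x, hio ⟨x, hx, rfl⟩, ⟨x, hx, rfl⟩⟩
    by_contra hns
    obtain ⟨z, hz, hzn⟩ := not_subset.1 hns
    have hne2 : (interior M ∩ (φ '' M)ᶜ).Nonempty := by
      refine ⟨z, hz, fun hzim => hzn ?_⟩
      rw [hkey]; exact ⟨hzim, hz⟩
    obtain ⟨w, hw, hw1, hw2⟩ := hpre (φ '' interior M) ((φ '' M)ᶜ) hopen hcomp.isClosed.isOpen_compl hcover hne1 hne2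
    exact hw2 (image_mono interior_subset hw1)
  have hint : φ '' interior M = interior M := Subset.antisymm hio hintsub
  constructor
  · conv_lhs => rw [hMunion]
    rw [image_union, hint, hbd]
    exact hMunion.symm
  · exact hint
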